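/- arXiv:2001.03825 — 3 statements merged into one kernel-verified Lean document; each statement's English description precedes it below -/
import Mathlib

section
/- For even k ≥ 0, if a polynomial w of degree at most k on [-1,1] satisfies ∫_{-1}^{1} w dx = 0 and, for all polynomials v of degree at most k, -∫_{-1}^{1} w v' dx + (w(-1)+w(1))/2 · (v(1)-v(-1)) = 0, then w is identically zero. -/
open Polynomial MeasureTheory intervalIntegral Set

noncomputable def antideriv (q : ℝ[X]) : ℝ[X] :=
  q.sum fun n a => Polynomial.C (a / (n + 1)) * Polynomial.X ^ (n + 1)

lemma deriv_antideriv (q : ℝ[X]) : derivative (antideriv q) = q := by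
  conv_rhs => rw [← q.sum_C_mul_X_pow_eq]
  rw [antideriv, Polynomial.sum, map_sum, Polynomial.sum]
  refine Finset.sum_congr rfl fun n _ => ?_
  rw [derivative_C_mul, derivative_X_pow, Nat.add_sub_cancel, ← mul_assoc, ← C_mul]
  push_cast
  rw [div_mul_cancel₀]
  positivity

lemma degree_antideriv_le (q : ℝ[X]) (n : ℕ) (h : q.degree < n) :
    (antideriv q).degree ≤ n := by
  refine (Polynomial.degree_sum_le _ _).trans ?_
  rw [Finset.sup_le_iff]
  intro b hb
  refine (degree_C_mul_X_pow_le _ _).trans ?_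
  have hb' : (b : WithBot ℕ) ≤ q.degree := Polynomial.le_degree_of_ne_zero (Polynomial.mem_support_iff.mp hb)
  have : b < n := by exact_mod_cast hb'.trans_lt h
  exact_mod_cast Nat.succ_le_of_lt this

lemma coeff_comp_neg (p : ℝ[X]) (n : ℕ) :
    (p.comp (-X)).coeff n = (-1) ^ n * p.coeff n := by
  induction p using Polynomial.induction_on' with
  | add p q hp hq => simp [add_comp, hp, hq, mul_add]
  | monomial i a =>
    have h1 : ((monomial i a).comp (-X) : ℝ[X]) = C (a * (-1) ^ i) * X ^ i := by
      rw [monomial_comp, show (-X : ℝ[X]) = C (-1) * X by simp, mul_pow, ← C_pow, ← mul_assoc, ← C_mul]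
    rw [h1, coeff_C_mul, coeff_X_pow, coeff_monomial]
    by_cases h : i = n
    · subst h; simp [mul_comm]
    · rw [if_neg h, if_neg fun hh => h hh.symm, mul_zero, mul_zero]

lemma poly_intable (p : ℝ[X]) (a b : ℝ) :
    IntervalIntegrable (fun x => p.eval x) volume a b :=
  (p.continuous_aeval).intervalIntegrable a b

lemma poly_zero_of_nonneg (p : ℝ[X]) (hnn : ∀ x ∈ Set.Ioc (-1:ℝ) 1, 0 ≤ p.eval x)
    (hz : (∫ x in (-1:ℝ)..1, p.eval x) = 0) : p = 0 := by
  by_contra hp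
  have hae : (fun x => p.eval x) =ᵐ[volume.restrict (Ioc (-1:ℝ) 1)] 0 := by
    refine (integral_eq_zero_iff_of_le_of_nonneg_ae (by norm_num) ?_ (poly_intable p _ _)).mp hz
    exact (ae_restrict_iff' measurableSet_Ioc).mpr (Filter.Eventually.of_forall hnn)
  have hnull : volume.restrict (Ioc (-1:ℝ) 1) {x | p.eval x ≠ 0} = 0 := by
    have h := hae
    rw [Filter.EventuallyEq, Filter.eventually_iff, mem_ae_iff] at h
    simp at h ⊢; exact h
  have hroots : Set.Finite {x : ℝ | p.IsRoot x} := p.finite_setOf_isRoot hp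
  have hsub : Ioc (-1:ℝ) 1 \ {x : ℝ | p.IsRoot x} ⊆ {x | p.eval x ≠ 0} := by
    intro x hx; exact hx.2
  have h0 : volume.restrict (Ioc (-1:ℝ) 1) (Ioc (-1:ℝ) 1 \ {x : ℝ | p.IsRoot x}) = 0 :=
    measure_mono_null hsub hnull
  rw [Measure.restrict_apply (measurableSet_Ioc.diff hroots.measurableSet)] at h0
  rw [Set.inter_eq_left.mpr Set.diff_subset, measure_diff_null (hroots.measure_zero _)] at h0
  simp [Real.volume_Ioc] at h0
  norm_num at h0

lemma poly_ftc (v : ℝ[X]) :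
    (∫ x in (-1:ℝ)..1, (derivative v).eval x) = v.eval 1 - v.eval (-1) := by
  refine intervalIntegral.integral_eq_sub_of_hasDerivAt (fun x _ => v.hasDerivAt x) ?_
  exact poly_intable _ _ _

theorem stmt0 (k : ℕ) (hk : Even k) (w : Polynomial ℝ) (hw : w.degree ≤ (k : ℕ))
    (havg : (∫ x in (-1:ℝ)..1, w.eval x) = 0)
    (hbil : ∀ v : Polynomial ℝ, v.degree ≤ (k : ℕ) →
      -(∫ x in (-1:ℝ)..1, w.eval x * (Polynomial.derivative v).eval x)
        + (w.eval (-1) + w.eval 1) / 2 * (v.eval 1 - v.eval (-1)) = 0) :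
    w = 0 := by
  by_contra hw0
  rcases Nat.eq_zero_or_pos k with hk0 | hkpos
  · subst hk0
    have hC := Polynomial.eq_C_of_degree_le_zero (by exact_mod_cast hw)
    rw [hC] at havg
    simp [intervalIntegral.integral_const] at havg
    exact hw0 (by rw [hC, havg, map_zero])
  -- step 1 : the average of boundary values vanishes
  have hα : w.eval (-1) + w.eval 1 = 0 := by
    have h := hbil X (by rw [degree_X]; exact_mod_cast hkpos)
    simp only [derivative_X, eval_one, mul_one, eval_X] at h
    rw [havg] at h
    linarith
  -- step 2 : orthogonality to lower-degree polynomials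
  have L1 : ∀ q : ℝ[X], q.degree < (k:ℕ) →
      (∫ x in (-1:ℝ)..1, w.eval x * q.eval x) = 0 := by
    intro q hq
    have h := hbil (antideriv q) (degree_antideriv_le q k hq)
    rw [deriv_antideriv, hα] at h
    simpa using h
  -- step 3 : the reflected polynomial is also orthogonal
  set wn := w.comp (-X : ℝ[X]) with hwn
  have hwelneg : ∀ x : ℝ, wn.eval x = w.eval (-x) := fun x => by
    simp [hwn, eval_comp]
  have hdegwn : wn.degree ≤ (k:ℕ) := by
    rw [degree_le_iff_coeff_zero]
    intro m hm
    rw [hwn, coeff_comp_neg, w.coeff_eq_zero_of_degree_lt (hw.trans_lt hm), mul_zero]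
  have compdeg : ∀ q : ℝ[X], q.degree < (k:ℕ) → (q.comp (-X)).degree < (k:ℕ) := by
    intro q hq
    rw [degree_lt_iff_coeff_zero] at hq ⊢
    intro m hm
    rw [coeff_comp_neg, hq m hm, mul_zero]
  have L2 : ∀ q : ℝ[X], q.degree < (k:ℕ) →
      (∫ x in (-1:ℝ)..1, wn.eval x * q.eval x) = 0 := by
    intro q hq
    have key : (∫ x in (-1:ℝ)..1, wn.eval x * q.eval x)
        = ∫ x in (-1:ℝ)..1, w.eval x * (q.comp (-X)).eval x := by
      have h := intervalIntegral.integral_comp_neg (a := (-1:ℝ)) (b := 1)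
        (fun x => w.eval x * (q.comp (-X)).eval x)
      simp only [eval_comp, eval_neg, eval_X, neg_neg] at h
      simp_rw [hwelneg]
      simpa [eval_comp] using h
    rw [key]
    exact L1 _ (compdeg q hq)
  -- step 4 : w is even
  set d := w - wn with hd
  have hddeg : d.degree < (k:ℕ) := by
    rw [degree_lt_iff_coeff_zero]
    intro m hm
    rcases eq_or_lt_of_le hm with rfl | h
    · rw [hd, coeff_sub, hwn, coeff_comp_neg, hk.neg_one_pow, one_mul, sub_self]
    · have h' : (k:WithBot ℕ) < m := by exact_mod_cast h
      rw [hd, coeff_sub, w.coeff_eq_zero_of_degree_lt (hw.trans_lt h'),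
        coeff_eq_zero_of_degree_lt (hdegwn.trans_lt h'), sub_zero]
  have hd0 : d = 0 := by
    rw [← mul_self_eq_zero (a := d)]
    apply poly_zero_of_nonneg (d * d)
    · intro x _
      rw [eval_mul]
      exact mul_self_nonneg _
    · have heq : ∀ x : ℝ, (d*d).eval x
          = w.eval x * d.eval x - wn.eval x * d.eval x := by
        intro x; simp only [hd, eval_mul, eval_sub]; ring
      simp_rw [heq]
      rw [intervalIntegral.integral_sub, L1 d hddeg, L2 d hddeg, sub_zero]
      · exact ((w.continuous_aeval.mul d.continuous_aeval).intervalIntegrable _ _)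
      · exact ((wn.continuous_aeval.mul d.continuous_aeval).intervalIntegrable _ _)
  have hwwn : w = wn := sub_eq_zero.mp hd0
  have he1 : w.eval 1 = w.eval (-1) := by
    conv_lhs => rw [hwwn]
    rw [hwelneg]
  have hw1 : w.eval 1 = 0 := by linarith
  have hwm1 : w.eval (-1) = 0 := by linarith
  -- step 5 : factor out (X-1)(X+1)
  obtain ⟨s, hs⟩ := (dvd_iff_isRoot.mpr hw1 : (X - C 1) ∣ w)
  have hs1 : s.eval (-1) = 0 := by
    rw [hs] at hwm1
    simp at hwm1
    rcases hwm1 with h | h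
    · linarith
    · exact h
  obtain ⟨r, hr⟩ := (dvd_iff_isRoot.mpr hs1 : (X - C (-1)) ∣ s)
  have hwfact : w = (X - C 1) * (X - C (-1)) * r := by rw [hs, hr, mul_assoc]
  have hr0 : r ≠ 0 := fun h => hw0 (by rw [hwfact, h, mul_zero])
  have hrdeg : r.degree < (k:ℕ) := by
    have h2 : ((X - C (1:ℝ)) * (X - C (-1))).degree = 2 := by
      rw [degree_mul, degree_X_sub_C, degree_X_sub_C]; rfl
    have hle : (2 : WithBot ℕ) + r.degree ≤ (k:ℕ) := by
      rw [← h2, ← degree_mul, ← hwfact]; exact hw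
    rw [degree_eq_natDegree hr0] at hle ⊢
    have hle' : 2 + r.natDegree ≤ k := by exact_mod_cast hle
    exact_mod_cast (by omega : r.natDegree < k)
  -- step 6 : conclude
  have key := L1 r hrdeg
  set p := -(w * r) with hp
  have hpz : (∫ x in (-1:ℝ)..1, p.eval x) = 0 := by
    simp_rw [hp, eval_neg, eval_mul]
    rw [intervalIntegral.integral_neg, key, neg_zero]
  have hp0 : p = 0 := by
    refine poly_zero_of_nonneg p (fun x hx => ?_) hpz
    have hev : p.eval x = (1 - x) * (1 + x) * (r.eval x)^2 := by
      rw [hp, hwfact]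
      simp only [eval_neg, eval_mul, eval_sub, eval_X, eval_C]
      ring
    rw [hev]
    have h1 := hx.1
    have h2 := hx.2
    exact mul_nonneg (mul_nonneg (by linarith) (by linarith)) (sq_nonneg _)
  rw [hp, neg_eq_zero, mul_eq_zero] at hp0
  rcases hp0 with h | h
  · exact hw0 h
  · exact hr0 h
end

section
/- For even k ≥ 2, if a polynomial w of degree at most k on [-1,1] satisfies ∫_{-1}^{1} w dx = 0 and w(-1) + w(1) = 0 and ∫_{-1}^{1} w v' dx = 0 for all polynomials v of degree at most k, then w = 0. -/
open Polynomial MeasureTheory intervalIntegral Set Function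

lemma aux_coeff_comp_neg (p : ℝ[X]) (m : ℕ) :
    (p.comp (-Polynomial.X)).coeff m = (-1)^m * p.coeff m := by
  induction p using Polynomial.induction_on' with
  | add f g hf hg => simp [add_comp, hf, hg, mul_add]
  | monomial n a =>
    simp only [Polynomial.comp, eval₂_monomial, coeff_monomial]
    rw [show ((-X : ℝ[X]))^n = (-1)^n * X^n by rw [neg_pow]]
    rw [show C a * ((-1:ℝ[X])^n * X^n) = ((-1:ℝ[X])^n) * (C a * X^n) by ring]
    rw [show ((-1:ℝ[X])^n) = C ((-1:ℝ)^n) by simp]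
    rw [coeff_C_mul, coeff_C_mul, coeff_X_pow]
    by_cases h : n = m
    · simp [h]
    · rw [if_neg (fun hmn : m = n => h hmn.symm)]
      simp [h]

lemma aux_zero (p : ℝ[X]) (hnn : ∀ x ∈ Set.Ioc (-1:ℝ) 1, 0 ≤ p.eval x)
    (hint : (∫ x in (-1:ℝ)..1, p.eval x) = 0) : p = 0 := by
  by_contra hp
  have hcont : Continuous fun x : ℝ => p.eval x := p.continuous
  have hInt : IntervalIntegrable (fun x : ℝ => p.eval x) volume (-1) 1 :=
    hcont.intervalIntegrable _ _
  have hae : 0 ≤ᵐ[volume.restrict (Set.uIoc (-1:ℝ) 1)] fun x : ℝ => p.eval x := by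
    rw [Set.uIoc_of_le (by norm_num : (-1:ℝ) ≤ 1)]
    exact (ae_restrict_iff' measurableSet_Ioc).2 (Filter.Eventually.of_forall hnn)
  have hpos := (integral_pos_iff_support_of_nonneg_ae' hae hInt).2
  have hroots : {x : ℝ | p.IsRoot x}.Finite := p.finite_setOf_isRoot hp
  have hsub : Set.Ioc (-1:ℝ) 1 \ {x : ℝ | p.IsRoot x} ⊆
      Function.support (fun x : ℝ => p.eval x) ∩ Set.Ioc (-1:ℝ) 1 := by
    rintro x ⟨hx1, hx2⟩
    exact ⟨hx2, hx1⟩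
  have hmeas : (0:ENNReal) < volume (Function.support (fun x : ℝ => p.eval x) ∩ Set.Ioc (-1:ℝ) 1) := by
    refine lt_of_lt_of_le ?_ (measure_mono hsub)
    rw [measure_diff_null (hroots.measure_zero _), Real.volume_Ioc]
    norm_num
  have := hpos ⟨by norm_num, hmeas⟩
  rw [hint] at this
  exact lt_irrefl 0 this

theorem stmt2 (k : ℕ) (hk : Even k) (hk2 : 2 ≤ k) (w : Polynomial ℝ)
    (hw : w.degree ≤ (k : ℕ))
    (havg : (∫ x in (-1:ℝ)..1, w.eval x) = 0)
    (hbd : w.eval (-1) + w.eval 1 = 0)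
    (horth : ∀ v : Polynomial ℝ, v.degree ≤ (k : ℕ) →
      (∫ x in (-1:ℝ)..1, w.eval x * (Polynomial.derivative v).eval x) = 0) :
    w = 0 := by
  -- Step 1: w is orthogonal to all polynomials of degree < k
  have key : ∀ p : Polynomial ℝ, p.degree < (k : ℕ) →
      (∫ x in (-1:ℝ)..1, w.eval x * p.eval x) = 0 := by
    intro p hp
    by_cases hp0 : p = 0
    · simp [hp0]
    set v : Polynomial ℝ := ∑ n ∈ p.support, Polynomial.C (p.coeff n / (n+1)) * Polynomial.X^(n+1)
      with hv
    have hdv : Polynomial.derivative v = p := by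
      rw [hv, map_sum]
      have h1 : ∀ n ∈ p.support,
          Polynomial.derivative (Polynomial.C (p.coeff n / (n+1)) * Polynomial.X^(n+1))
          = Polynomial.C (p.coeff n) * Polynomial.X^n := by
        intro n _
        rw [Polynomial.derivative_C_mul, Polynomial.derivative_X_pow]
        push_cast
        rw [← mul_assoc, ← Polynomial.C_mul, div_mul_cancel₀]
        exact (Nat.cast_add_one_pos n).ne'
      rw [Finset.sum_congr rfl h1]
      conv_rhs => rw [← Polynomial.sum_C_mul_X_pow_eq p]
      rfl
    have hdeg : v.degree ≤ (k : ℕ) := by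
      refine le_trans (Polynomial.degree_sum_le _ _) ?_
      refine Finset.sup_le fun n hn => ?_
      refine le_trans (Polynomial.degree_C_mul_X_pow_le _ _) ?_
      have h2 : n ≤ p.natDegree := Polynomial.le_natDegree_of_mem_supp n hn
      have h3 : p.natDegree < k := by
        rwa [← Polynomial.natDegree_lt_iff_degree_lt hp0] at hp
      exact_mod_cast by omega
    have := horth v hdeg
    rwa [hdv] at this
  -- Step 2: the odd part of w vanishes
  set d : Polynomial ℝ := w - w.comp (-Polynomial.X) with hd
  have hdeval : ∀ x : ℝ, d.eval x = w.eval x - w.eval (-x) := by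
    intro x; simp [hd, Polynomial.eval_comp]
  have hdlt : d.degree < (k : ℕ) := by
    rw [Polynomial.degree_lt_iff_coeff_zero]
    intro m hm
    rcases eq_or_lt_of_le hm with h | h
    · rw [hd, Polynomial.coeff_sub, aux_coeff_comp_neg, ← h, hk.neg_one_pow, one_mul, sub_self]
    · have hwm : w.coeff m = 0 :=
        Polynomial.coeff_eq_zero_of_degree_lt (lt_of_le_of_lt hw (by exact_mod_cast h))
      rw [hd, Polynomial.coeff_sub, aux_coeff_comp_neg, hwm, mul_zero, sub_self]
  have hIwd : (∫ x in (-1:ℝ)..1, w.eval x * d.eval x) = 0 := key d hdlt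
  have hodd : ∀ x : ℝ, d.eval (-x) = - d.eval x := by
    intro x; rw [hdeval, hdeval, neg_neg]; ring
  have hIwnd : (∫ x in (-1:ℝ)..1, w.eval (-x) * d.eval x) = 0 := by
    have hcn := integral_comp_neg (a := (-1:ℝ)) (b := 1)
      (f := fun y : ℝ => w.eval y * d.eval (-y))
    simp only [neg_neg] at hcn
    rw [hcn]
    simp only [hodd, mul_neg]
    rw [intervalIntegral.integral_neg, hIwd, neg_zero]
  have hIdd : (∫ x in (-1:ℝ)..1, (d*d).eval x) = 0 := by
    have heq : ∀ x : ℝ, (d*d).eval x = w.eval x * d.eval x - w.eval (-x) * d.eval x := by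
      intro x; rw [Polynomial.eval_mul, hdeval]; ring
    simp only [heq]
    rw [intervalIntegral.integral_sub, hIwd, hIwnd, sub_zero]
    · exact ((w.continuous.mul d.continuous)).intervalIntegrable _ _
    · exact (((w.continuous.comp continuous_neg)).mul d.continuous).intervalIntegrable _ _
  have hd0 : d = 0 := by
    have := aux_zero (d*d) (fun x _ => by rw [Polynomial.eval_mul]; exact mul_self_nonneg _) hIdd
    exact mul_self_eq_zero.mp this
  -- Step 3: w is even, hence w(1) = w(-1) = 0
  have heven : ∀ x : ℝ, w.eval (-x) = w.eval x := by
    intro x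
    have h := hdeval x
    rw [hd0, Polynomial.eval_zero] at h
    linarith
  have hw1 : w.eval 1 = 0 := by have h := heven 1; linarith
  have hwm1 : w.eval (-1) = 0 := by have h := heven 1; linarith
  -- Step 4: factor out (X-1)(X+1)
  have hdvd : (Polynomial.X - Polynomial.C (1:ℝ)) * (Polynomial.X - Polynomial.C (-1:ℝ)) ∣ w := by
    refine IsCoprime.mul_dvd ?_ ?_ ?_
    · exact Polynomial.isCoprime_X_sub_C_of_isUnit_sub (by norm_num)
    · exact Polynomial.dvd_iff_isRoot.2 hw1
    · exact Polynomial.dvd_iff_isRoot.2 hwm1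
  obtain ⟨u, hu⟩ := hdvd
  by_cases hu0 : u = 0
  · rw [hu, hu0, mul_zero]
  exfalso
  have hXC1 : (Polynomial.X - Polynomial.C (1:ℝ)) ≠ 0 := Polynomial.X_sub_C_ne_zero 1
  have hXC2 : (Polynomial.X - Polynomial.C (-1:ℝ)) ≠ 0 := Polynomial.X_sub_C_ne_zero (-1)
  have hw0 : w ≠ 0 := by rw [hu]; exact mul_ne_zero (mul_ne_zero hXC1 hXC2) hu0
  have hult : u.degree < (k : ℕ) := by
    have hnd : w.natDegree = 2 + u.natDegree := by
      rw [hu, Polynomial.natDegree_mul (mul_ne_zero hXC1 hXC2) hu0,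
        Polynomial.natDegree_mul hXC1 hXC2, Polynomial.natDegree_X_sub_C,
        Polynomial.natDegree_X_sub_C]
    have hwk : w.natDegree ≤ k := Polynomial.natDegree_le_iff_degree_le.2 hw
    have : u.natDegree < k := by omega
    exact lt_of_le_of_lt Polynomial.degree_le_natDegree (by exact_mod_cast this)
  have hIu : (∫ x in (-1:ℝ)..1, w.eval x * u.eval x) = 0 := key u hult
  have hz := aux_zero (-((Polynomial.X - Polynomial.C (1:ℝ)) * (Polynomial.X - Polynomial.C (-1:ℝ)) * u * u)) ?_ ?_
  · have : (Polynomial.X - Polynomial.C (1:ℝ)) * (Polynomial.X - Polynomial.C (-1:ℝ)) * u * u = 0 :=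
      neg_eq_zero.mp hz
    rcases mul_eq_zero.mp this with h | h
    · rcases mul_eq_zero.mp h with h' | h'
      · exact (mul_ne_zero hXC1 hXC2) h'
      · exact hu0 h'
    · exact hu0 h
  · intro x hx
    simp only [Polynomial.eval_neg, Polynomial.eval_mul, Polynomial.eval_sub,
      Polynomial.eval_X, Polynomial.eval_C]
    nlinarith [mul_nonneg (mul_nonneg (by linarith [hx.2] : (0:ℝ) ≤ 1 - x)
      (by linarith [hx.1] : (0:ℝ) ≤ x + 1)) (mul_self_nonneg (u.eval x))]
  · have heq2 : ∀ x : ℝ,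
        (-((Polynomial.X - Polynomial.C (1:ℝ)) * (Polynomial.X - Polynomial.C (-1:ℝ)) * u * u)).eval x
        = -(w.eval x * u.eval x) := by
      intro x
      rw [hu]
      simp only [Polynomial.eval_neg, Polynomial.eval_mul]
    simp only [heq2]
    rw [intervalIntegral.integral_neg, hIu, neg_zero]
end

section
/- For even k ≥ 0 on the square [-1,1]², if a tensor-product polynomial u of degree at most k in each variable satisfies: (a) ∫∫ u·v dxdy = 0 for all tensor-product polynomials v of degree at most k-1 in each variable; (b) ∫_{-1}^1 (u(x,1)+u(x,-1))/2 · φ(x) dx = 0 for all polynomials φ of degree ≤ k-1; (c) ∫_{-1}^1 (u(1,y)+u(-1,y))/2 · φ(y) dy = 0 for all polynomials φ of degree ≤ k-1; and (d) u(1,1)+u(1,-1)+u(-1,1)+u(-1,-1) = 0; then u is identically zero. -/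
open MeasureTheory intervalIntegral Polynomial Finset Set Function


noncomputable def nu (m : ℕ) : ℝ := ∫ x in (-1:ℝ)..1, x ^ m

lemma nu_odd {m : ℕ} (hm : Odd m) : nu m = 0 := by
  have : Even (m + 1) := by simpa using hm.add_one
  rw [nu, integral_pow]
  rw [this.neg_one_pow]
  norm_num

noncomputable def Ee (m : ℕ) : ℝ := (1 + (-1:ℝ) ^ m) / 2

lemma Ee_even {m : ℕ} (h : Even m) : Ee m = 1 := by rw [Ee, h.neg_one_pow]; norm_num
lemma Ee_odd {m : ℕ} (h : Odd m) : Ee m = 0 := by rw [Ee, h.neg_one_pow]; norm_num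

lemma int_sum (N : ℕ) (a : ℕ → ℝ) (i : ℕ) :
    (∫ x in (-1:ℝ)..1, (∑ m ∈ range N, a m * x ^ m) * x ^ i)
      = ∑ m ∈ range N, a m * nu (m + i) := by
  have h1 : ∀ x : ℝ, (∑ m ∈ range N, a m * x ^ m) * x ^ i
      = ∑ m ∈ range N, a m * x ^ (m + i) := by
    intro x
    rw [Finset.sum_mul]
    exact Finset.sum_congr rfl fun m _ => by rw [pow_add]; ring
  simp_rw [h1]
  rw [intervalIntegral.integral_finset_sum]
  · exact Finset.sum_congr rfl fun m _ => by
      rw [intervalIntegral.integral_const_mul]; rfl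
  · intro m _
    exact (continuous_const.mul (continuous_pow _)).intervalIntegrable _ _

lemma weighted_zero (w : ℝ → ℝ) (hw : Continuous w)
    (hnn : ∀ x ∈ Set.Icc (-1:ℝ) 1, 0 ≤ w x)
    (hpos : ∀ x ∈ Set.Ioo (-1:ℝ) 1, 0 < w x)
    (Q : Polynomial ℝ)
    (h : (∫ x in (-1:ℝ)..1, w x * (Q.eval x) ^ 2) = 0) : Q = 0 := by
  by_contra hQ
  set f : ℝ → ℝ := fun x => w x * (Q.eval x) ^ 2 with hf
  have hcont : Continuous f := hw.mul ((Q.continuous_aeval).pow 2)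
  have hint : IntervalIntegrable f volume (-1) 1 := hcont.intervalIntegrable _ _
  have hae : 0 ≤ᵐ[volume.restrict (Set.uIoc (-1:ℝ) 1)] f := by
    rw [Set.uIoc_of_le (by norm_num : (-1:ℝ) ≤ 1)]
    refine (MeasureTheory.ae_restrict_iff' measurableSet_Ioc).2 (MeasureTheory.ae_of_all _ ?_)
    intro x hx
    exact mul_nonneg (hnn x (Set.Ioc_subset_Icc_self hx)) (sq_nonneg _)
  have hpos' : 0 < ∫ x in (-1:ℝ)..1, f x := by
    rw [intervalIntegral.integral_pos_iff_support_of_nonneg_ae' hae hint]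
    refine ⟨by norm_num, ?_⟩
    have hroots : ({x : ℝ | Q.IsRoot x}).Finite := Polynomial.finite_setOf_isRoot hQ
    have hsub : Set.Ioo (-1:ℝ) 1 \ {x : ℝ | Q.IsRoot x} ⊆ support f ∩ Set.Ioc (-1:ℝ) 1 := by
      rintro x ⟨hx1, hx2⟩
      refine ⟨?_, Set.Ioo_subset_Ioc_self hx1⟩
      simp only [mem_support, hf]
      have h1 : w x ≠ 0 := (hpos x hx1).ne'
      have h2 : Q.eval x ≠ 0 := hx2
      positivity
    calc (0:ENNReal) < volume (Set.Ioo (-1:ℝ) 1 \ {x : ℝ | Q.IsRoot x}) := by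
          rw [measure_diff_null (hroots.measure_zero _)]
          simp [Real.volume_Ioo]
      _ ≤ _ := measure_mono hsub
  rw [h] at hpos'
  exact lt_irrefl 0 hpos'

noncomputable def pa (N : ℕ) (a : ℕ → ℝ) : Polynomial ℝ :=
  ∑ m ∈ range N, Polynomial.C (a m) * Polynomial.X ^ m

lemma pa_eval (N : ℕ) (a : ℕ → ℝ) (x : ℝ) :
    (pa N a).eval x = ∑ m ∈ range N, a m * x ^ m := by
  simp [pa, Polynomial.eval_finset_sum]

lemma pa_coeff (N : ℕ) (a : ℕ → ℝ) (m : ℕ) :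
    (pa N a).coeff m = if m < N then a m else 0 := by
  rw [pa, Polynomial.finset_sum_coeff]
  simp_rw [Polynomial.coeff_C_mul, Polynomial.coeff_X_pow, mul_ite, mul_one, mul_zero]
  by_cases h : m < N
  · rw [if_pos h, Finset.sum_eq_single m]
    · simp
    · intro b _ hb; exact if_neg (fun e => hb e.symm)
    · intro hm; exact absurd (Finset.mem_range.2 h) hm
  · rw [if_neg h, Finset.sum_eq_zero]
    intro b hb
    exact if_neg (by rintro rfl; exact h (Finset.mem_range.1 hb))


lemma cont_sum (N : ℕ) (a : ℕ → ℝ) : Continuous (fun x : ℝ => ∑ m ∈ range N, a m * x ^ m) :=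
  continuous_finset_sum _ fun m _ => continuous_const.mul (continuous_pow m)

lemma Mcoef (k : ℕ) (hk : Even k) (a : ℕ → ℝ)
    (h1 : ∀ i, i < k → ∑ m ∈ range (k+1), a m * nu (m+i) = 0)
    (h2 : ∑ m ∈ range (k+1), a m * Ee m = 0) :
    ∀ m, m ≤ k → a m = 0 := by
  classical
  -- Step 1: odd coefficients vanish
  set b : ℕ → ℝ := fun m => if Odd m then a m else 0 with hb
  have claim1 : ∀ i, Odd i → i ≤ k → ∑ m ∈ range (k+1), b m * nu (m+i) = 0 := by
    intro i hi hik
    have hik' : i < k := lt_of_le_of_ne hik (by rintro rfl; exact (Nat.not_even_iff_odd.2 hi) hk)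
    have : ∀ m ∈ range (k+1), b m * nu (m+i) = a m * nu (m+i) := by
      intro m _
      by_cases hm : Odd m
      · simp [hb, hm]
      · have hodd : Odd (m + i) := (Nat.not_odd_iff_even.1 hm).add_odd hi
        simp [hb, hm, nu_odd hodd]
    rw [Finset.sum_congr rfl this]
    exact h1 i hik'
  have claim2 : (∫ x in (-1:ℝ)..1, (1:ℝ) * ((pa (k+1) b).eval x) ^ 2) = 0 := by
    have expand : ∀ x : ℝ, (1:ℝ) * ((pa (k+1) b).eval x) ^ 2
        = ∑ m ∈ range (k+1), b m * ((∑ m' ∈ range (k+1), b m' * x ^ m') * x ^ m) := by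
      intro x
      rw [one_mul, pa_eval, sq, Finset.sum_mul]
      exact Finset.sum_congr rfl fun m _ => by ring
    simp_rw [expand]
    rw [intervalIntegral.integral_finset_sum]
    · rw [Finset.sum_eq_zero]
      intro m hm
      rw [intervalIntegral.integral_const_mul, int_sum]
      by_cases hmo : Odd m
      · rw [claim1 m hmo (Nat.lt_succ_iff.1 (Finset.mem_range.1 hm)), mul_zero]
      · simp [hb, hmo]
    · intro m _
      exact (continuous_const.mul ((cont_sum _ b).mul (continuous_pow m))).intervalIntegrable _ _
  have hbz : pa (k+1) b = 0 :=
    weighted_zero (fun _ => 1) continuous_const (fun _ _ => zero_le_one)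
      (fun _ _ => zero_lt_one) _ claim2
  have ha_odd : ∀ m, m ≤ k → Odd m → a m = 0 := by
    intro m hm hmo
    have := pa_coeff (k+1) b m
    rw [hbz] at this
    simp only [Polynomial.coeff_zero] at this
    rw [if_pos (Nat.lt_succ_iff.2 hm)] at this
    simpa [hb, hmo] using this.symm
  -- Step 2: boundary values
  set P : Polynomial ℝ := pa (k+1) a with hP
  have hsum_eq : ∀ x : ℝ, ((fun m => a m * x ^ m) : ℕ → ℝ) = _ := fun _ => rfl
  have heval1 : P.eval 1 = 0 := by
    rw [hP, pa_eval]
    rw [← h2]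
    refine Finset.sum_congr rfl fun m hm => ?_
    by_cases hmo : Odd m
    · rw [ha_odd m (Nat.lt_succ_iff.1 (Finset.mem_range.1 hm)) hmo]; ring
    · rw [Ee_even (Nat.not_odd_iff_even.1 hmo), one_pow]
  have hevalm1 : P.eval (-1) = 0 := by
    rw [hP, pa_eval]
    rw [← h2]
    refine Finset.sum_congr rfl fun m hm => ?_
    by_cases hmo : Odd m
    · rw [ha_odd m (Nat.lt_succ_iff.1 (Finset.mem_range.1 hm)) hmo]; ring
    · rw [Ee_even (Nat.not_odd_iff_even.1 hmo), (Nat.not_odd_iff_even.1 hmo).neg_one_pow]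
  -- Step 3: P = 0
  have hPdeg : P.natDegree ≤ k := by
    rw [Polynomial.natDegree_le_iff_coeff_eq_zero]
    intro m hm
    rw [hP, pa_coeff, if_neg (by omega)]
  have hPzero : P = 0 := by
    by_contra hPne
    obtain ⟨q1, hq1⟩ := (Polynomial.dvd_iff_isRoot.2 heval1 : (X - Polynomial.C 1) ∣ P)
    have hq1root : q1.eval (-1) = 0 := by
      have := hevalm1
      rw [hq1] at this
      simp only [Polynomial.eval_mul, Polynomial.eval_sub, Polynomial.eval_X,
        Polynomial.eval_C] at this
      linarith [this]
    obtain ⟨q, hq⟩ := (Polynomial.dvd_iff_isRoot.2 hq1root : (X - Polynomial.C (-1)) ∣ q1)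
    have hqne : q ≠ 0 := by
      rintro rfl
      rw [mul_zero] at hq
      rw [hq, mul_zero] at hq1
      exact hPne hq1
    have hq1ne : q1 ≠ 0 := by rintro rfl; rw [mul_zero] at hq1; exact hPne hq1
    have hdeg : q.natDegree + 2 ≤ k := by
      have d1 : P.natDegree = 1 + q1.natDegree := by
        rw [hq1, Polynomial.natDegree_mul (Polynomial.X_sub_C_ne_zero 1) hq1ne,
          Polynomial.natDegree_X_sub_C]
      have d2 : q1.natDegree = 1 + q.natDegree := by
        rw [hq, Polynomial.natDegree_mul (Polynomial.X_sub_C_ne_zero (-1)) hqne,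
          Polynomial.natDegree_X_sub_C]
      omega
    have key : (∫ x in (-1:ℝ)..1, (1 - x^2) * (q.eval x) ^ 2) = 0 := by
      have ptwise : ∀ x : ℝ, (1 - x^2) * (q.eval x) ^ 2
          = ∑ i ∈ range (q.natDegree + 1),
              (-(q.coeff i)) * ((∑ m ∈ range (k+1), a m * x ^ m) * x ^ i) := by
        intro x
        have e1 : P.eval x = (x - 1) * ((x - (-1)) * q.eval x) := by
          rw [hq1, hq]; simp [Polynomial.eval_mul]
        have e2 : (1 - x^2) * (q.eval x) ^ 2 = -(P.eval x * q.eval x) := by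
          rw [e1]; ring
        rw [e2]
        have e3 : q.eval x = ∑ i ∈ range (q.natDegree + 1), q.coeff i * x ^ i :=
          q.eval_eq_sum_range x
        rw [← pa_eval (k+1) a x, ← hP] at *
        calc -(P.eval x * q.eval x)
            = -(P.eval x * ∑ i ∈ range (q.natDegree + 1), q.coeff i * x ^ i) := by rw [← e3]
          _ = ∑ i ∈ range (q.natDegree + 1), (-(q.coeff i)) * (P.eval x * x ^ i) := by
              rw [Finset.mul_sum, ← Finset.sum_neg_distrib]
              exact Finset.sum_congr rfl fun i _ => by ring
          _ = _ := by rw [hP]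
      simp_rw [ptwise]
      rw [intervalIntegral.integral_finset_sum]
      · rw [Finset.sum_eq_zero]
        intro i hi
        rw [intervalIntegral.integral_const_mul, int_sum, h1 i
          (by have := Finset.mem_range.1 hi; omega), mul_zero]
      · intro i _
        exact (continuous_const.mul ((cont_sum _ a).mul (continuous_pow i))).intervalIntegrable _ _
    have := weighted_zero (fun x => 1 - x^2)
      (continuous_const.sub (continuous_pow 2))
      (fun x hx => by show (0:ℝ) ≤ 1 - x^2; nlinarith [hx.1, hx.2])
      (fun x hx => by show (0:ℝ) < 1 - x^2; nlinarith [hx.1, hx.2]) q key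
    exact hqne this
  intro m hm
  have := pa_coeff (k+1) a m
  rw [← hP, hPzero] at this
  simp only [Polynomial.coeff_zero] at this
  rw [if_pos (Nat.lt_succ_iff.2 hm)] at this
  exact this.symm


section helpers

lemma swap_flat (N : ℕ) (f : ℕ → ℕ → ℝ) (g h : ℕ → ℝ) :
    ∑ n ∈ range N, (∑ m ∈ range N, f m n * g m) * h n
      = ∑ m ∈ range N, (∑ n ∈ range N, f m n * h n) * g m := by
  simp only [Finset.sum_mul]
  rw [Finset.sum_comm]
  exact Finset.sum_congr rfl fun m _ => Finset.sum_congr rfl fun n _ => by ring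

end helpers

theorem stmt6 (k : ℕ) (hk : Even k) (c : ℕ → ℕ → ℝ) (u : ℝ → ℝ → ℝ)
    (hu : ∀ x y : ℝ, u x y =
      ∑ i ∈ Finset.range (k+1), ∑ j ∈ Finset.range (k+1), c i j * x ^ i * y ^ j)
    (hmom : ∀ i j : ℕ, i < k → j < k →
      (∫ x in (-1:ℝ)..1, ∫ y in (-1:ℝ)..1, u x y * x ^ i * y ^ j) = 0)
    (hedgex : ∀ i : ℕ, i < k →
      (∫ x in (-1:ℝ)..1, (u x 1 + u x (-1)) / 2 * x ^ i) = 0)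
    (hedgey : ∀ j : ℕ, j < k →
      (∫ y in (-1:ℝ)..1, (u 1 y + u (-1) y) / 2 * y ^ j) = 0)
    (hcorner : u 1 1 + u 1 (-1) + u (-1) 1 + u (-1) (-1) = 0) :
    ∀ x y : ℝ, u x y = 0 := by
  classical
  set N := k + 1 with hN
  -- (A) moments condition in coefficient form
  have hinner : ∀ (i j : ℕ) (x : ℝ), (∫ y in (-1:ℝ)..1, u x y * x^i * y^j)
      = (∑ m ∈ range N, (∑ n ∈ range N, c m n * nu (n+j)) * x^m) * x^i := by
    intro i j x
    have hpt : ∀ y : ℝ, u x y * x^i * y^j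
        = (∑ n ∈ range N, (((∑ m ∈ range N, c m n * x^m) * x^i) * y^n)) * y^j := by
      intro y
      rw [hu x y]
      simp only [Finset.sum_mul]
      rw [Finset.sum_comm]
      exact Finset.sum_congr rfl fun n _ => Finset.sum_congr rfl fun m _ => by ring
    simp_rw [hpt]
    rw [int_sum N (fun n => (∑ m ∈ range N, c m n * x^m) * x^i) j]
    simp only [Finset.sum_mul]
    rw [Finset.sum_comm]
    exact Finset.sum_congr rfl fun n _ => Finset.sum_congr rfl fun m _ => by ring
  have hA : ∀ i j : ℕ, i < k → j < k →
      ∑ m ∈ range N, (∑ n ∈ range N, c m n * nu (n+j)) * nu (m+i) = 0 := by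
    intro i j hi hj
    have h := hmom i j hi hj
    simp_rw [hinner i j] at h
    rw [int_sum N _ i] at h
    exact h
  -- (B) x-edge condition
  have hB : ∀ i : ℕ, i < k →
      ∑ m ∈ range N, (∑ n ∈ range N, c m n * Ee n) * nu (m+i) = 0 := by
    intro i hi
    have h := hedgex i hi
    have hpt : ∀ x : ℝ, (u x 1 + u x (-1)) / 2 * x^i
        = (∑ m ∈ range N, (∑ n ∈ range N, c m n * Ee n) * x^m) * x^i := by
      intro x
      rw [hu x 1, hu x (-1)]
      simp only [Finset.sum_mul, Finset.sum_div, ← Finset.sum_add_distrib]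
      exact Finset.sum_congr rfl fun m _ => Finset.sum_congr rfl fun n _ => by
        rw [Ee]; ring
    simp_rw [hpt] at h
    rw [int_sum N _ i] at h
    exact h
  -- (C) y-edge condition
  have hC : ∀ j : ℕ, j < k →
      ∑ n ∈ range N, (∑ m ∈ range N, c m n * Ee m) * nu (n+j) = 0 := by
    intro j hj
    have h := hedgey j hj
    have hpt : ∀ y : ℝ, (u 1 y + u (-1) y) / 2 * y^j
        = (∑ n ∈ range N, (∑ m ∈ range N, c m n * Ee m) * y^n) * y^j := by
      intro y
      rw [hu 1 y, hu (-1) y]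
      simp only [Finset.sum_mul, Finset.sum_div, ← Finset.sum_add_distrib]
      rw [Finset.sum_comm]
      exact Finset.sum_congr rfl fun n _ => Finset.sum_congr rfl fun m _ => by
        rw [Ee]; ring
    simp_rw [hpt] at h
    rw [int_sum N _ j] at h
    exact h
  -- (D) corner condition
  have hD : ∑ n ∈ range N, (∑ m ∈ range N, c m n * Ee m) * Ee n = 0 := by
    have h := hcorner
    rw [hu 1 1, hu 1 (-1), hu (-1) 1, hu (-1) (-1)] at h
    have expand : ∑ m ∈ range N, ∑ n ∈ range N, (4:ℝ) * (c m n * Ee m * Ee n) = 0 := by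
      rw [← h]
      simp only [← Finset.sum_add_distrib]
      exact Finset.sum_congr rfl fun m _ => Finset.sum_congr rfl fun n _ => by
        simp only [Ee]; ring
    have h4 : (4:ℝ) * ∑ n ∈ range N, (∑ m ∈ range N, c m n * Ee m) * Ee n = 0 := by
      rw [← expand, Finset.sum_comm]
      simp only [Finset.mul_sum, Finset.sum_mul]
    linarith [h4]
  -- Application 1: s i n = 0
  have hs : ∀ i : ℕ, i < k → ∀ n, n ≤ k → ∑ m ∈ range N, c m n * nu (m+i) = 0 := by
    intro i hi
    apply Mcoef k hk
    · intro j hj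
      rw [show ∑ n ∈ range (k+1), (∑ m ∈ range (k+1), c m n * nu (m+i)) * nu (n+j)
          = ∑ m ∈ range (k+1), (∑ n ∈ range (k+1), c m n * nu (n+j)) * nu (m+i) from
          swap_flat (k+1) c _ _]
      exact hA i j hi hj
    · rw [show ∑ n ∈ range (k+1), (∑ m ∈ range (k+1), c m n * nu (m+i)) * Ee n
          = ∑ m ∈ range (k+1), (∑ n ∈ range (k+1), c m n * Ee n) * nu (m+i) from
          swap_flat (k+1) c _ _]
      exact hB i hi
  -- Application 2: t n = 0
  have ht : ∀ n, n ≤ k → ∑ m ∈ range N, c m n * Ee m = 0 := by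
    apply Mcoef k hk
    · intro j hj; exact hC j hj
    · exact hD
  -- Application 3: c m n = 0
  have hc : ∀ n, n ≤ k → ∀ m, m ≤ k → c m n = 0 := by
    intro n hn
    apply Mcoef k hk
    · intro i hi; exact hs i hi n hn
    · exact ht n hn
  intro x y
  rw [hu x y]
  apply Finset.sum_eq_zero
  intro m hm
  apply Finset.sum_eq_zero
  intro n hn
  rw [hc n (Nat.lt_succ_iff.1 (Finset.mem_range.1 hn)) m (Nat.lt_succ_iff.1 (Finset.mem_range.1 hm))]
  ring
end
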